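/- An effect a of a unital C*-algebra (i.e., 0 ≤ a ≤ 1) is a projection (a² = a) if and only if the only effect below both a and 1 − a is 0; that is, a² = a if and only if every b with 0 ≤ b ≤ 1, b ≤ a and b ≤ 1 − a satisfies b = 0. -/

import Mathlib

/-- An effect `a` of a unital C*-algebra (i.e. `0 ≤ a ≤ 1`) is a projection if and only if
the only effect below both `a` and `1 - a` is `0`. -/
theorem effect_is_projection_iff
    {A : Type*} [CStarAlgebra A] [PartialOrder A] [StarOrderedRing A]
    (a : A) (ha0 : 0 ≤ a) (ha1 : a ≤ 1) :
    a * a = a ↔ ∀ b : A, 0 ≤ b → b ≤ 1 → b ≤ a → b ≤ 1 - a → b = 0 := by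
  have hsa : IsSelfAdjoint a := .of_nonneg ha0
  have hsa' : IsSelfAdjoint (1 - a) := by
    rw [IsSelfAdjoint, star_sub, star_one, hsa.star_eq]
  constructor
  · intro hproj b hb0 hb1 hba hba'
    have hsb : IsSelfAdjoint (CFC.sqrt b) := .of_nonneg (CFC.sqrt_nonneg b)
    have key : ∀ c : A, IsSelfAdjoint c → c * b * c ≤ 0 → b * c = 0 := by
      intro c hc hle
      have h0 : (0 : A) ≤ c * b * c := by
        simpa [hc.star_eq] using star_left_conjugate_nonneg hb0 c
      have hz : c * b * c = 0 := le_antisymm hle h0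
      have hsc : star (CFC.sqrt b * c) * (CFC.sqrt b * c) = 0 := by
        calc star (CFC.sqrt b * c) * (CFC.sqrt b * c)
            = c * (CFC.sqrt b * CFC.sqrt b) * c := by
              simp [star_mul, hc.star_eq, hsb.star_eq, mul_assoc]
          _ = 0 := by rw [CFC.sqrt_mul_sqrt_self b hb0]; exact hz
      have hc0 : CFC.sqrt b * c = 0 := by
        rwa [CStarRing.star_mul_self_eq_zero_iff] at hsc
      calc b * c = CFC.sqrt b * (CFC.sqrt b * c) := by
            rw [← mul_assoc, CFC.sqrt_mul_sqrt_self b hb0]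
        _ = 0 := by rw [hc0, mul_zero]
    have h1 : b * a = 0 := by
      apply key a hsa
      calc a * b * a ≤ a * (1 - a) * a := by
            simpa [hsa.star_eq] using star_left_conjugate_le_conjugate hba' a
        _ = 0 := by rw [mul_sub, mul_one, hproj, sub_self, zero_mul]
    have h2 : b * (1 - a) = 0 := by
      apply key (1 - a) hsa'
      calc (1 - a) * b * (1 - a) ≤ (1 - a) * a * (1 - a) := by
            simpa [hsa'.star_eq] using star_left_conjugate_le_conjugate hba (1 - a)
        _ = 0 := by rw [sub_mul, one_mul, hproj, sub_self, zero_mul]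
    have := h2
    rw [mul_sub, mul_one, h1, sub_zero] at this
    exact this
  · intro h
    have hsq : CFC.sqrt a * CFC.sqrt a = a := CFC.sqrt_mul_sqrt_self a ha0
    have hss : IsSelfAdjoint (CFC.sqrt a) := .of_nonneg (CFC.sqrt_nonneg a)
    set s := CFC.sqrt a with hs
    have hmid : s * a * s = a * a := by
      rw [← hsq]; simp only [mul_assoc]
    have hb0 : (0 : A) ≤ a - a * a := by
      have hpos := star_left_conjugate_nonneg (sub_nonneg.mpr ha1) s
      rw [hss.star_eq] at hpos
      calc (0 : A) ≤ s * (1 - a) * s := hpos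
        _ = a - a * a := by rw [mul_sub, mul_one, sub_mul, hsq, hmid]
    have hba : a - a * a ≤ a := by
      have hpos : (0 : A) ≤ a * a := by
        simpa [hsa.star_eq] using star_mul_self_nonneg a
      exact sub_le_self a hpos
    have hba' : a - a * a ≤ 1 - a := by
      have hpos : (0 : A) ≤ (1 - a) * (1 - a) := by
        simpa [hsa'.star_eq] using star_mul_self_nonneg (1 - a)
      have hexp : (1 - a) * (1 - a) = 1 - a - (a - a * a) := by noncomm_ring
      rw [hexp] at hpos
      exact sub_nonneg.mp hpos
    have hb1 : a - a * a ≤ 1 := hba.trans ha1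
    have := h (a - a * a) hb0 hb1 hba hba'
    rw [sub_eq_zero] at this
    exact this.symm
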